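/- In the extra-special setting, any antichain in the poset Δ(1) has at most 3 elements, provided Δ is not of type A₁. More precisely, if γ₁, …, γ_k ∈ Δ(1) are pairwise incomparable roots of the same height (the middle height h/2, for Δ not of type A), then they are pairwise orthogonal, θ − Σγᵢ is a root in Δ(2−k), and k ≤ 3. -/

import Mathlib

open RealInnerProductSpace


variable {V : Type*} [NormedAddCommGroup V] [InnerProductSpace ℝ V]

/-- Data of a reduced crystallographic root system `Δ` in a Euclidean space, together with a
choice of positive system `Δ⁺` and the corresponding simple roots `Π`. -/
structure RootSystemData (V : Type*) [NormedAddCommGroup V] [InnerProductSpace ℝ V] where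
  roots : Finset V
  pos : Finset V
  simples : Finset V
  zero_not_mem : (0 : V) ∉ roots
  neg_mem : ∀ γ ∈ roots, -γ ∈ roots
  reduced : ∀ γ ∈ roots, ∀ c : ℝ, c • γ ∈ roots → c = 1 ∨ c = -1
  crystallographic : ∀ γ ∈ roots, ∀ δ ∈ roots,
    ∃ n : ℤ, 2 * (inner ℝ γ δ : ℝ) / (inner ℝ δ δ : ℝ) = (n : ℝ)
  reflect_mem : ∀ γ ∈ roots, ∀ δ ∈ roots,
    γ - (2 * (inner ℝ γ δ : ℝ) / (inner ℝ δ δ : ℝ)) • δ ∈ roots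
  pos_subset : pos ⊆ roots
  pos_or_neg : ∀ γ ∈ roots, γ ∈ pos ∨ -γ ∈ pos
  pos_neg_disjoint : ∀ γ ∈ pos, -γ ∉ pos
  simples_subset : simples ⊆ pos
  simples_indep : LinearIndependent ℝ (fun α : {x // x ∈ simples} => (α : V))
  pos_combo : ∀ γ ∈ pos, ∃ c : V → ℕ, γ = ∑ α ∈ simples, (c α : ℝ) • α

/-- Irreducibility: the roots admit no partition into two nonempty mutually orthogonal parts. -/
def RootSystemData.Irreducible (R : RootSystemData V) : Prop :=
  ∀ A B : Set V, A ∪ B = ↑R.roots → Disjoint A B →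
    (∀ a ∈ A, ∀ b ∈ B, (inner ℝ a b : ℝ) = 0) → A = ∅ ∨ B = ∅

/-- The reflection in the hyperplane orthogonal to `δ`. -/
noncomputable def reflAt (δ : V) : Function.End V :=
  fun x => x - (2 * (inner ℝ x δ : ℝ) / (inner ℝ δ δ : ℝ)) • δ

/-- The Weyl group, generated by the reflections in the roots (each reflection is an
involution, so the closure as a monoid of endomorphisms coincides with the generated group). -/
def weylGroup (R : RootSystemData V) : Submonoid (Function.End V) :=
  Submonoid.closure {f | ∃ δ ∈ R.roots, f = reflAt δ}

/-- The inversion set `N(w) = {γ ∈ Δ⁺ : w(γ) < 0}`. -/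
def invSet (R : RootSystemData V) (w : Function.End V) : Set V :=
  {γ | γ ∈ R.pos ∧ -(w γ) ∈ R.pos}

/-- The pairing `(γ, θ∨) = 2(γ,θ)/(θ,θ)`. -/
noncomputable def copair (θ γ : V) : ℝ := 2 * (inner ℝ γ θ : ℝ) / (inner ℝ θ θ : ℝ)

/-- `μ ≤ γ` iff `γ − μ` is a nonnegative integer combination of the simple roots lying in
the subset `Z`. -/
def rootLEon (simples : Finset V) (Z : Set V) (μ γ : V) : Prop :=
  ∃ c : V → ℕ, (∀ α, α ∉ Z → c α = 0) ∧ γ = μ + ∑ α ∈ simples, (c α : ℝ) • α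

/-- `Δ(1) = {γ ∈ Δ⁺ : (γ, θ∨) = 1}`, the positive roots at level one. -/
noncomputable def levelOnePos (R : RootSystemData V) (θ : V) : Set V :=
  {γ | γ ∈ R.pos ∧ copair θ γ = 1}

lemma copair_add (θ x y : V) : copair θ (x + y) = copair θ x + copair θ y := by
  simp [copair, inner_add_left, mul_add, add_div]

lemma copair_neg (θ x : V) : copair θ (-x) = - copair θ x := by
  simp [copair, inner_neg_left, neg_div]

lemma copair_sub (θ x y : V) : copair θ (x - y) = copair θ x - copair θ y := by
  simp [copair, inner_sub_left, mul_sub, sub_div]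

lemma copair_self (θ : V) (h : (⟪θ, θ⟫ : ℝ) ≠ 0) : copair θ θ = 2 := by
  simp only [copair, mul_div_assoc, div_self h, mul_one]

lemma inner_self_pos' {x : V} (h : x ≠ 0) : (0:ℝ) < ⟪x, x⟫ :=
  lt_of_le_of_ne real_inner_self_nonneg (Ne.symm (inner_self_ne_zero.mpr h))

lemma inner_theta_of_copair_one {θ γ : V} (hT : (0:ℝ) < ⟪θ,θ⟫) (h : copair θ γ = 1) :
    ⟪γ, θ⟫ = ⟪θ,θ⟫ / 2 := by
  unfold copair at h
  field_simp at h
  linarith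


lemma root_ne_zero (R : RootSystemData V) {γ : V} (hγ : γ ∈ R.roots) : γ ≠ 0 := by
  rintro rfl; exact R.zero_not_mem hγ

lemma root_add_mem (R : RootSystemData V) {γ δ : V} (hγ : γ ∈ R.roots) (hδ : δ ∈ R.roots)
    (hneg : (⟪γ, δ⟫ : ℝ) < 0) (hne : γ ≠ -δ) : γ + δ ∈ R.roots := by
  obtain ⟨m, hm⟩ := R.crystallographic γ hγ δ hδ
  obtain ⟨n, hn⟩ := R.crystallographic δ hδ γ hγ
  have hγγ : (0:ℝ) < ⟪γ,γ⟫ := inner_self_pos' (root_ne_zero R hγ)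
  have hδδ : (0:ℝ) < ⟪δ,δ⟫ := inner_self_pos' (root_ne_zero R hδ)
  have hδγ : (⟪δ, γ⟫ : ℝ) < 0 := by rw [real_inner_comm]; exact hneg
  have hmR : (m:ℝ) < 0 := by
    rw [← hm]; exact div_neg_of_neg_of_pos (by linarith) hδδ
  have hnR : (n:ℝ) < 0 := by
    rw [← hn]; exact div_neg_of_neg_of_pos (by linarith) hγγ
  have hm1 : m ≤ -1 := by have : m < 0 := by exact_mod_cast hmR
                          omega
  have hn1 : n ≤ -1 := by have : n < 0 := by exact_mod_cast hnR
                          omega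
  by_cases hmc : m = -1
  · have := R.reflect_mem γ hγ δ hδ
    rw [hm, hmc] at this
    simpa [sub_neg_eq_add] using this
  by_cases hnc : n = -1
  · have := R.reflect_mem δ hδ γ hγ
    rw [hn, hnc] at this
    have : δ + γ ∈ R.roots := by simpa [sub_neg_eq_add] using this
    rwa [add_comm] at this
  -- m ≤ -2, n ≤ -2
  have hm2 : m ≤ -2 := by omega
  have hn2 : n ≤ -2 := by omega
  have hkey : (m:ℝ) * n * (⟪δ,δ⟫ * ⟪γ,γ⟫) = 4 * (⟪γ,δ⟫ * ⟪γ,δ⟫) := by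
    rw [← hm, ← hn, real_inner_comm δ γ]
    field_simp
    ring
  have hcs : (⟪γ,δ⟫:ℝ) * ⟪γ,δ⟫ ≤ ⟪γ,γ⟫ * ⟪δ,δ⟫ := real_inner_mul_inner_self_le γ δ
  have hmn4 : (m:ℝ) * n ≤ 4 := by
    nlinarith [mul_pos hδδ hγγ]
  have hmn4' : m * n ≤ 4 := by exact_mod_cast hmn4
  have hmn : m = -2 ∧ n = -2 := by constructor <;> nlinarith
  obtain ⟨rfl, rfl⟩ := hmn
  -- then inner products forced, γ + δ = 0, contradiction
  have e1 : (⟪γ,δ⟫:ℝ) = -⟪δ,δ⟫ := by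
    have := hm; field_simp at this; push_cast at this; linarith
  have e2 : (⟪δ,γ⟫:ℝ) = -⟪γ,γ⟫ := by
    have := hn; field_simp at this; push_cast at this; linarith
  have e2' : (⟪γ,δ⟫:ℝ) = -⟪γ,γ⟫ := by rw [← real_inner_comm δ γ] at e2; exact e2
  exfalso
  apply hne
  have : (⟪γ+δ, γ+δ⟫:ℝ) = 0 := by
    rw [real_inner_add_add_self]; linarith
  have h0 : γ + δ = 0 := inner_self_eq_zero.mp this
  exact eq_neg_of_add_eq_zero_left h0

lemma root_sub_mem (R : RootSystemData V) {γ δ : V} (hγ : γ ∈ R.roots) (hδ : δ ∈ R.roots)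
    (hpos : (0:ℝ) < ⟪γ, δ⟫) (hne : γ ≠ δ) : γ - δ ∈ R.roots := by
  have h := root_add_mem R hγ (R.neg_mem δ hδ) (by rw [inner_neg_right]; linarith)
    (by simpa using hne)
  simpa [sub_eq_add_neg] using h

lemma coeff_eq (s : Finset V) (hind : LinearIndependent ℝ (fun α : {x // x ∈ s} => (α : V)))
    {f g : V → ℝ} (h : ∑ α ∈ s, f α • α = ∑ α ∈ s, g α • α) : ∀ α ∈ s, f α = g α := by
  have h0 : ∑ α ∈ s, (f α - g α) • α = 0 := by
    simp only [sub_smul, Finset.sum_sub_distrib, h, sub_self]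
  have h1 : ∑ i : {x // x ∈ s}, (f i - g i) • (i : V) = 0 := by
    rw [s.sum_coe_sort (fun α => (f α - g α) • α)]; exact h0
  have h2 := Fintype.linearIndependent_iff.mp hind (fun i => f i - g i) h1
  intro α hα
  have := h2 ⟨α, hα⟩
  simpa [sub_eq_zero] using this

/-- every simple root pairs 0 or 1 with θ -/
lemma simples_copair (R : RootSystemData V) {θ : V} (hA1 : 2 < R.roots.card) (hθp : θ ∈ R.pos)
    (hhigh : ∀ γ ∈ R.pos, ∃ c : V → ℕ, θ = γ + ∑ α ∈ R.simples, (c α : ℝ) • α)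
    (hextra : ∀ γ ∈ R.pos, copair θ γ = 0 ∨ copair θ γ = 1 ∨ γ = θ) :
    ∀ α ∈ R.simples, copair θ α = 0 ∨ copair θ α = 1 := by
  classical
  intro α hα
  rcases hextra α (R.simples_subset hα) with h | h | h
  · exact Or.inl h
  · exact Or.inr h
  exfalso
  subst h
  -- α = θ ∈ simples; show all simples equal θ
  have hall : ∀ β ∈ R.simples, β = α := by
    intro β hβ
    by_contra hbt
    obtain ⟨c, hc⟩ := hhigh β (R.simples_subset hβ)
    have h1 : ∑ x ∈ R.simples, (if x = α then (1:ℝ) else 0) • x = α := by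
      simp [ite_smul, Finset.sum_ite_eq', hα]
    have h2 : ∑ x ∈ R.simples, ((if x = β then (1:ℝ) else 0) + (c x : ℝ)) • x = α := by
      simp only [add_smul, Finset.sum_add_distrib, ite_smul, one_smul, zero_smul,
        Finset.sum_ite_eq', hβ, if_true]
      exact hc.symm
    have := coeff_eq R.simples R.simples_indep (h1.trans h2.symm) β hβ
    simp only [if_neg hbt, if_pos rfl] at this
    have : (0:ℝ) = 1 + (c β : ℝ) := this
    have hcb : (0:ℝ) ≤ (c β : ℝ) := Nat.cast_nonneg _
    linarith
  -- hence pos ⊆ {α}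
  have hsimp : R.simples = {α} := by
    apply Finset.eq_singleton_iff_unique_mem.mpr
    exact ⟨hα, hall⟩
  have hposs : ∀ γ ∈ R.pos, γ = α := by
    intro γ hγ
    obtain ⟨c, hc⟩ := R.pos_combo γ hγ
    rw [hsimp, Finset.sum_singleton] at hc
    have hmem : ((c α : ℝ)) • α ∈ R.roots := hc ▸ R.pos_subset hγ
    rcases R.reduced α (R.pos_subset hθp) _ hmem with h | h
    · rw [hc, h, one_smul]
    · exfalso
      have : (0:ℝ) ≤ (c α : ℝ) := Nat.cast_nonneg _
      rw [h] at this; linarith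
  have hsub : R.roots ⊆ ({α, -α} : Finset V) := by
    intro γ hγ
    rcases R.pos_or_neg γ hγ with hp | hp
    · simp [hposs γ hp]
    · have : -γ = α := hposs _ hp
      have : γ = -α := by rw [← this, neg_neg]
      simp [this]
  have := Finset.card_le_card hsub
  have h2 : ({α, -α} : Finset V).card ≤ 2 := by
    apply le_trans (Finset.card_insert_le _ _); simp
  omega
lemma pos_expand (R : RootSystemData V) (θ : V) {γ : V} (hγ : γ ∈ R.pos) :
    ∃ c : V → ℕ, γ = ∑ α ∈ R.simples, (c α : ℝ) • α ∧
      copair θ γ = ∑ α ∈ R.simples, (c α : ℝ) * copair θ α := by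
  obtain ⟨c, hc⟩ := R.pos_combo γ hγ
  refine ⟨c, hc, ?_⟩
  rw [hc]
  unfold copair
  rw [sum_inner, Finset.mul_sum, Finset.sum_div]
  refine Finset.sum_congr rfl fun α _ => ?_
  rw [real_inner_smul_left]
  ring

lemma pos_copair_nonneg (R : RootSystemData V) {θ : V}
    (hsc : ∀ α ∈ R.simples, copair θ α = 0 ∨ copair θ α = 1)
    {γ : V} (hγ : γ ∈ R.pos) : 0 ≤ copair θ γ := by
  obtain ⟨c, -, hc2⟩ := pos_expand R θ hγ
  rw [hc2]
  refine Finset.sum_nonneg fun α hα => ?_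
  rcases hsc α hα with h | h <;> rw [h] <;> positivity

lemma zdec (R : RootSystemData V) {θ : V}
    (hsc : ∀ α ∈ R.simples, copair θ α = 0 ∨ copair θ α = 1)
    {γ : V} (hγ : γ ∈ R.pos) (h0 : copair θ γ = 0) :
    ∃ c : V → ℕ, (∀ α, copair θ α ≠ 0 → c α = 0) ∧ γ = ∑ α ∈ R.simples, (c α : ℝ) • α := by
  classical
  obtain ⟨c, hc1, hc2⟩ := pos_expand R θ hγ
  rw [h0] at hc2
  have hterm : ∀ α ∈ R.simples, (c α : ℝ) * copair θ α = 0 := by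
    intro α hα
    have hnn : ∀ β ∈ R.simples, 0 ≤ (c β : ℝ) * copair θ β := by
      intro β hβ
      rcases hsc β hβ with h | h <;> rw [h] <;> positivity
    exact (Finset.sum_eq_zero_iff_of_nonneg hnn).mp hc2.symm α hα
  refine ⟨fun α => if copair θ α = 0 then c α else 0, fun α hα => by simp [hα], ?_⟩
  rw [hc1]
  refine Finset.sum_congr rfl fun α hα => ?_
  by_cases h : copair θ α = 0
  · simp [h]
  · have := hterm α hα
    rcases hsc α hα with h' | h'
    · exact absurd h' h
    · rw [h', mul_one] at this
      simp [h, this]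

lemma le_of_zsum (R : RootSystemData V) (θ : V) {x y : V} (c : V → ℕ)
    (hsupp : ∀ α, copair θ α ≠ 0 → c α = 0)
    (hxy : y = x + ∑ α ∈ R.simples, (c α : ℝ) • α) :
    rootLEon R.simples {α | copair θ α = 0} x y :=
  ⟨c, fun α hα => hsupp α hα, hxy⟩

lemma no_sub_root (R : RootSystemData V) {θ : V}
    (hsc : ∀ α ∈ R.simples, copair θ α = 0 ∨ copair θ α = 1)
    {γ δ : V} (hρ : δ - γ ∈ R.roots) (h0 : copair θ (δ - γ) = 0)
    (h1 : ¬ rootLEon R.simples {α | copair θ α = 0} γ δ)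
    (h2 : ¬ rootLEon R.simples {α | copair θ α = 0} δ γ) : False := by
  rcases R.pos_or_neg _ hρ with hp | hp
  · obtain ⟨c, hc1, hc2⟩ := zdec R hsc hp h0
    exact h1 (le_of_zsum R θ c hc1 (by rw [← hc2]; abel))
  · rw [neg_sub] at hp
    have h0' : copair θ (γ - δ) = 0 := by rw [copair_sub] at h0 ⊢; linarith
    obtain ⟨c, hc1, hc2⟩ := zdec R hsc hp h0'
    exact h2 (le_of_zsum R θ c hc1 (by rw [← hc2]; abel))

lemma copair_cases (R : RootSystemData V) {θ : V} (hθp : θ ∈ R.pos)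
    (hextra : ∀ γ ∈ R.pos, copair θ γ = 0 ∨ copair θ γ = 1 ∨ γ = θ)
    {γ : V} (hγ : γ ∈ R.roots) :
    γ = θ ∨ γ = -θ ∨ copair θ γ = 0 ∨ copair θ γ = 1 ∨ copair θ γ = -1 := by
  rcases R.pos_or_neg _ hγ with hp | hp
  · rcases hextra γ hp with h | h | h
    · exact Or.inr (Or.inr (Or.inl h))
    · exact Or.inr (Or.inr (Or.inr (Or.inl h)))
    · exact Or.inl h
  · rcases hextra _ hp with h | h | h
    · rw [copair_neg] at h
      exact Or.inr (Or.inr (Or.inl (by linarith)))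
    · rw [copair_neg] at h
      exact Or.inr (Or.inr (Or.inr (Or.inr (by linarith))))
    · exact Or.inr (Or.inl (by rw [← h, neg_neg]))

lemma level_of_copair_one (R : RootSystemData V) {θ : V}
    (hsc : ∀ α ∈ R.simples, copair θ α = 0 ∨ copair θ α = 1)
    {γ : V} (hγ : γ ∈ R.roots) (h1 : copair θ γ = 1) : γ ∈ levelOnePos R θ := by
  rcases R.pos_or_neg _ hγ with hp | hp
  · exact ⟨hp, h1⟩
  · have := pos_copair_nonneg R hsc hp
    rw [copair_neg, h1] at this
    linarith
lemma theta_inner_pos (R : RootSystemData V) {θ : V} (hθp : θ ∈ R.pos) :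
    (0:ℝ) < ⟪θ,θ⟫ := inner_self_pos' (root_ne_zero R (R.pos_subset hθp))

lemma not_theta_eq_add (R : RootSystemData V) {θ : V} (hθp : θ ∈ R.pos)
    (hsc : ∀ α ∈ R.simples, copair θ α = 0 ∨ copair θ α = 1)
    {γ δ : V} (hγ : γ ∈ levelOnePos R θ) (hδ : δ ∈ levelOnePos R θ)
    (horth : (⟪γ,δ⟫:ℝ) = 0)
    (i1 : ¬ rootLEon R.simples {α | copair θ α = 0} γ δ)
    (i2 : ¬ rootLEon R.simples {α | copair θ α = 0} δ γ) : θ ≠ γ + δ := by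
  intro h
  have hγr : γ ∈ R.roots := R.pos_subset hγ.1
  have hθr : θ ∈ R.roots := R.pos_subset hθp
  have hγγ : (0:ℝ) < ⟪γ,γ⟫ := inner_self_pos' (root_ne_zero R hγr)
  have hδγ : (⟪δ,γ⟫:ℝ) = 0 := by rwa [← real_inner_comm]
  have hiθγ : (⟪θ,γ⟫:ℝ) = ⟪γ,γ⟫ := by
    rw [h, inner_add_left, hδγ, add_zero]
  have hco : 2 * (⟪θ,γ⟫:ℝ) / ⟪γ,γ⟫ = 2 := by
    rw [hiθγ]; field_simp
  have hrefl := R.reflect_mem θ hθr γ hγr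
  rw [hco] at hrefl
  have heq : θ - (2:ℝ) • γ = δ - γ := by
    rw [h, two_smul]; abel
  rw [heq] at hrefl
  have h0 : copair θ (δ - γ) = 0 := by
    rw [copair_sub, hγ.2, hδ.2]; ring
  exact no_sub_root R hsc hrefl h0 i1 i2

lemma incomp_inner (R : RootSystemData V) {θ : V} (hθp : θ ∈ R.pos)
    (hextra : ∀ γ ∈ R.pos, copair θ γ = 0 ∨ copair θ γ = 1 ∨ γ = θ)
    (hsc : ∀ α ∈ R.simples, copair θ α = 0 ∨ copair θ α = 1)
    {γ δ : V} (hγ : γ ∈ levelOnePos R θ) (hδ : δ ∈ levelOnePos R θ) (hne : γ ≠ δ)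
    (i1 : ¬ rootLEon R.simples {α | copair θ α = 0} γ δ)
    (i2 : ¬ rootLEon R.simples {α | copair θ α = 0} δ γ) :
    (⟪γ,δ⟫:ℝ) = 0 ∨ γ + δ = θ := by
  have hγr : γ ∈ R.roots := R.pos_subset hγ.1
  have hδr : δ ∈ R.roots := R.pos_subset hδ.1
  have hT : (0:ℝ) < ⟪θ,θ⟫ := theta_inner_pos R hθp
  rcases lt_trichotomy (⟪γ,δ⟫:ℝ) 0 with hlt | h0 | hgt
  · right
    have hne' : γ ≠ -δ := by
      intro h
      have := hγ.2
      rw [h, copair_neg, hδ.2] at this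
      linarith
    have hsum := root_add_mem R hγr hδr hlt hne'
    have hc2 : copair θ (γ + δ) = 2 := by rw [copair_add, hγ.2, hδ.2]; norm_num
    rcases copair_cases R hθp hextra hsum with h | h | h | h | h
    · exact h
    · exfalso
      rw [h, copair_neg, copair_self θ (ne_of_gt hT)] at hc2
      linarith
    all_goals (exfalso; rw [h] at hc2; norm_num at hc2)
  · exact Or.inl h0
  · exfalso
    have hsub := root_sub_mem R hγr hδr hgt hne
    have h0 : copair θ (γ - δ) = 0 := by rw [copair_sub, hγ.2, hδ.2]; ring
    exact no_sub_root R hsc hsub h0 i2 i1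

lemma keyM (R : RootSystemData V) {θ : V} (hθp : θ ∈ R.pos)
    (hsc : ∀ α ∈ R.simples, copair θ α = 0 ∨ copair θ α = 1) :
    ∀ (k : ℕ) (γ : Fin k → V), (∀ i, γ i ∈ levelOnePos R θ) →
    (∀ i j, i ≠ j → (⟪γ i, γ j⟫:ℝ) = 0) →
    (∀ i j, i ≠ j → ¬ rootLEon R.simples {α | copair θ α = 0} (γ i) (γ j)) →
    (θ - ∑ i, γ i) ∈ R.roots ∧ copair θ (θ - ∑ i, γ i) = 2 - (k : ℝ) := by
  have hT : (0:ℝ) < ⟪θ,θ⟫ := theta_inner_pos R hθp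
  intro k
  induction k with
  | zero =>
    intro γ _ _ _
    simp only [Finset.univ_eq_empty, Finset.sum_empty, sub_zero, Nat.cast_zero]
    exact ⟨R.pos_subset hθp, by simp [copair_self θ (ne_of_gt hT)]⟩
  | succ n ih =>
    intro γ hmem horth hinc
    have hcs : Function.Injective (Fin.castSucc : Fin n → Fin (n+1)) :=
      Fin.castSucc_injective n
    obtain ⟨ihr, ihc⟩ := ih (fun i => γ i.castSucc) (fun i => hmem _)
      (fun i j hij => horth _ _ (fun h => hij (hcs h)))
      (fun i j hij => hinc _ _ (fun h => hij (hcs h)))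
    set β := θ - ∑ i : Fin n, γ i.castSucc with hβ
    have hlast := hmem (Fin.last n)
    have hβin : (⟪β, γ (Fin.last n)⟫:ℝ) = ⟪θ,θ⟫ / 2 := by
      rw [hβ, inner_sub_left, sum_inner]
      have hz : ∀ i ∈ (Finset.univ : Finset (Fin n)),
          (⟪γ i.castSucc, γ (Fin.last n)⟫:ℝ) = 0 := by
        intro i _
        exact horth _ _ (Fin.ne_last_of_lt (Fin.castSucc_lt_last i))
      rw [Finset.sum_congr rfl hz]
      rw [real_inner_comm (γ (Fin.last n)) θ,
        inner_theta_of_copair_one hT hlast.2]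
      simp
    have hβpos : (0:ℝ) < ⟪β, γ (Fin.last n)⟫ := by rw [hβin]; linarith
    have hne : β ≠ γ (Fin.last n) := by
      intro hcontr
      have h2 : copair θ (γ (Fin.last n)) = 2 - (n:ℝ) := by rw [← hcontr]; exact ihc
      rw [hlast.2] at h2
      have hn1 : (n:ℝ) = 1 := by linarith
      have hn1' : n = 1 := by exact_mod_cast hn1
      subst hn1'
      have hsum1 : ∑ i : Fin 1, γ i.castSucc = γ 0 := by
        rw [Fin.sum_univ_one]; rfl
      rw [hβ, hsum1] at hcontr
      have hθeq : θ = γ 0 + γ (Fin.last 1) :=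
        (eq_add_of_sub_eq hcontr).trans (add_comm _ _)
      have h01 : (0 : Fin 2) ≠ Fin.last 1 := by decide
      exact not_theta_eq_add R hθp hsc (hmem 0) (hmem (Fin.last 1))
        (horth _ _ h01) (hinc _ _ h01) (hinc _ _ h01.symm) hθeq
    have hroot := root_sub_mem R ihr (R.pos_subset hlast.1) hβpos hne
    have hsum : θ - ∑ i : Fin (n+1), γ i = β - γ (Fin.last n) := by
      rw [Fin.sum_univ_castSucc, hβ]; abel
    constructor
    · rw [hsum]; exact hroot
    · rw [hsum, copair_sub, ihc, hlast.2]
      push_cast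
      ring
lemma pairContra (R : RootSystemData V) {θ : V}
    (hsc : ∀ α ∈ R.simples, copair θ α = 0 ∨ copair θ α = 1)
    {μ ν x y : V} (hμ : μ ∈ R.pos) (hν : ν ∈ R.pos)
    (hcμ : copair θ μ = 0) (hcν : copair θ ν = 0)
    (hsum : μ + ν = y - x)
    (hn : ¬ rootLEon R.simples {α | copair θ α = 0} x y) : False := by
  obtain ⟨c₁, hc₁, he₁⟩ := zdec R hsc hμ hcμ
  obtain ⟨c₂, hc₂, he₂⟩ := zdec R hsc hν hcν
  apply hn
  refine le_of_zsum R θ (fun α => c₁ α + c₂ α)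
    (fun α hα => by simp [hc₁ α hα, hc₂ α hα]) ?_
  have : y = x + (μ + ν) := by rw [hsum]; abel
  rw [this, he₁, he₂, ← Finset.sum_add_distrib]
  congr 1
  exact Finset.sum_congr rfl fun α _ => by push_cast; rw [add_smul]

lemma fourOrthSum (R : RootSystemData V) {θ : V} (hθp : θ ∈ R.pos)
    (hsc : ∀ α ∈ R.simples, copair θ α = 0 ∨ copair θ α = 1)
    {a b c d : V}
    (ha : a ∈ levelOnePos R θ) (hb : b ∈ levelOnePos R θ)
    (hc : c ∈ levelOnePos R θ) (hd : d ∈ levelOnePos R θ)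
    (oab : (⟪a,b⟫:ℝ) = 0) (oac : (⟪a,c⟫:ℝ) = 0) (oad : (⟪a,d⟫:ℝ) = 0)
    (iab : ¬ rootLEon R.simples {α | copair θ α = 0} a b)
    (iba : ¬ rootLEon R.simples {α | copair θ α = 0} b a)
    (iac : ¬ rootLEon R.simples {α | copair θ α = 0} a c)
    (ica : ¬ rootLEon R.simples {α | copair θ α = 0} c a)
    (iad : ¬ rootLEon R.simples {α | copair θ α = 0} a d)
    (ida : ¬ rootLEon R.simples {α | copair θ α = 0} d a)
    (hsum : a + b + c + d = θ + θ) : False := by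
  have hT : (0:ℝ) < ⟪θ,θ⟫ := theta_inner_pos R hθp
  have hθr : θ ∈ R.roots := R.pos_subset hθp
  have hθa : θ - a ∈ R.roots := by
    refine root_sub_mem R hθr (R.pos_subset ha.1) ?_ ?_
    · rw [real_inner_comm a θ, inner_theta_of_copair_one hT ha.2]; linarith
    · intro hcontr
      have := ha.2
      rw [← hcontr, copair_self θ (ne_of_gt hT)] at this
      norm_num at this
  have hμmem : ∀ x : V, x ∈ levelOnePos R θ → (⟪a,x⟫:ℝ) = 0 →
      (¬ rootLEon R.simples {α | copair θ α = 0} a x) →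
      (¬ rootLEon R.simples {α | copair θ α = 0} x a) →
      θ - a - x ∈ R.roots := by
    intro x hx hox h1 h2
    refine root_sub_mem R hθa (R.pos_subset hx.1) ?_ ?_
    · rw [inner_sub_left, real_inner_comm x θ, inner_theta_of_copair_one hT hx.2, hox]
      linarith
    · intro hcontr
      exact not_theta_eq_add R hθp hsc ha hx hox h1 h2
        ((sub_eq_iff_eq_add.mp hcontr).trans (add_comm _ _))
  have hμ1 : θ - a - b ∈ R.roots := hμmem b hb oab iab iba
  have hμ2 : θ - a - c ∈ R.roots := hμmem c hc oac iac ica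
  have hμ3 : θ - a - d ∈ R.roots := hμmem d hd oad iad ida
  have hc1 : copair θ (θ - a - b) = 0 := by
    rw [copair_sub, copair_sub, copair_self θ (ne_of_gt hT), ha.2, hb.2]; ring
  have hc2 : copair θ (θ - a - c) = 0 := by
    rw [copair_sub, copair_sub, copair_self θ (ne_of_gt hT), ha.2, hc.2]; ring
  have hc3 : copair θ (θ - a - d) = 0 := by
    rw [copair_sub, copair_sub, copair_self θ (ne_of_gt hT), ha.2, hd.2]; ring
  have e12 : (θ - a - b) + (θ - a - c) = d - a := by
    have : (θ - a - b) + (θ - a - c) = (θ + θ) - (a + b + c + d) + (d - a) := by abel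
    rw [this, ← hsum]; abel
  have e13 : (θ - a - b) + (θ - a - d) = c - a := by
    have : (θ - a - b) + (θ - a - d) = (θ + θ) - (a + b + c + d) + (c - a) := by abel
    rw [this, ← hsum]; abel
  have e23 : (θ - a - c) + (θ - a - d) = b - a := by
    have : (θ - a - c) + (θ - a - d) = (θ + θ) - (a + b + c + d) + (b - a) := by abel
    rw [this, ← hsum]; abel
  have negsum : ∀ u v w z : V, u + v = w - z → -u + -v = z - w := by
    intro u v w z h
    have : -u + -v = -(u + v) := by abel
    rw [this, h]; abel
  have negc : ∀ u : V, copair θ u = 0 → copair θ (-u) = 0 := by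
    intro u h; rw [copair_neg, h, neg_zero]
  rcases R.pos_or_neg _ hμ1 with p1 | n1
  · rcases R.pos_or_neg _ hμ2 with p2 | n2
    · exact pairContra R hsc p1 p2 hc1 hc2 e12 iad
    · rcases R.pos_or_neg _ hμ3 with p3 | n3
      · exact pairContra R hsc p1 p3 hc1 hc3 e13 iac
      · exact pairContra R hsc n2 n3 (negc _ hc2) (negc _ hc3) (negsum _ _ _ _ e23) iba
  · rcases R.pos_or_neg _ hμ2 with p2 | n2
    · rcases R.pos_or_neg _ hμ3 with p3 | n3
      · exact pairContra R hsc p2 p3 hc2 hc3 e23 iab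
      · exact pairContra R hsc n1 n3 (negc _ hc1) (negc _ hc3) (negsum _ _ _ _ e13) ica
    · exact pairContra R hsc n1 n2 (negc _ hc1) (negc _ hc2) (negsum _ _ _ _ e12) ida
lemma keyM3 (R : RootSystemData V) {θ : V} (hθp : θ ∈ R.pos)
    (hextra : ∀ γ ∈ R.pos, copair θ γ = 0 ∨ copair θ γ = 1 ∨ γ = θ)
    (hsc : ∀ α ∈ R.simples, copair θ α = 0 ∨ copair θ α = 1)
    (k : ℕ) (γ : Fin k → V) (hinj : Function.Injective γ)
    (hmem : ∀ i, γ i ∈ levelOnePos R θ)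
    (horth : ∀ i j, i ≠ j → (⟪γ i, γ j⟫:ℝ) = 0)
    (hinc : ∀ i j, i ≠ j → ¬ rootLEon R.simples {α | copair θ α = 0} (γ i) (γ j)) :
    k ≤ 3 := by
  by_contra hk
  push_neg at hk
  obtain ⟨hroot, hcop⟩ := keyM R hθp hsc k γ hmem horth hinc
  have hT : (0:ℝ) < ⟪θ,θ⟫ := theta_inner_pos R hθp
  have hk4 : (4:ℝ) ≤ (k:ℝ) := by exact_mod_cast hk
  rcases copair_cases R hθp hextra hroot with h | h | h | h | h
  · rw [h, copair_self θ (ne_of_gt hT)] at hcop; linarith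
  · -- θ - ∑ γ = -θ, so k = 4 and ∑ γ = θ + θ
    have h4 : (2:ℝ) - k = -2 := by
      rw [h, copair_neg, copair_self θ (ne_of_gt hT)] at hcop; linarith
    have hk4' : k = 4 := by
      have : (k:ℝ) = 4 := by linarith
      exact_mod_cast this
    subst hk4'
    have hsum : γ 0 + γ 1 + γ 2 + γ 3 = θ + θ := by
      have hs : θ - ∑ i, γ i = -θ := h
      have : ∑ i, γ i = θ + θ := by
        have h2 : θ + θ - ∑ i, γ i = θ + (θ - ∑ i, γ i) := by abel
        rw [hs] at h2
        have h3 : θ + θ - ∑ i, γ i = 0 := by rw [h2]; abel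
        exact (sub_eq_zero.mp h3).symm
      rw [← this, Fin.sum_univ_four]
    have d01 : (0 : Fin 4) ≠ 1 := by decide
    have d02 : (0 : Fin 4) ≠ 2 := by decide
    have d03 : (0 : Fin 4) ≠ 3 := by decide
    exact fourOrthSum R hθp hsc (hmem 0) (hmem 1) (hmem 2) (hmem 3)
      (horth _ _ d01) (horth _ _ d02) (horth _ _ d03)
      (hinc _ _ d01) (hinc _ _ d01.symm) (hinc _ _ d02) (hinc _ _ d02.symm)
      (hinc _ _ d03) (hinc _ _ d03.symm) hsum
  all_goals (rw [h] at hcop; linarith)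
lemma fourTheta (R : RootSystemData V) {θ : V} (hθp : θ ∈ R.pos)
    (hextra : ∀ γ ∈ R.pos, copair θ γ = 0 ∨ copair θ γ = 1 ∨ γ = θ)
    (hsc : ∀ α ∈ R.simples, copair θ α = 0 ∨ copair θ α = 1)
    {a b c d : V}
    (ha : a ∈ levelOnePos R θ) (hb : b ∈ levelOnePos R θ)
    (hc : c ∈ levelOnePos R θ) (hd : d ∈ levelOnePos R θ)
    (nac : a ≠ c) (nad : a ≠ d) (nbc : b ≠ c) (nbd : b ≠ d)
    (iac : ¬ rootLEon R.simples {α | copair θ α = 0} a c)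
    (ica : ¬ rootLEon R.simples {α | copair θ α = 0} c a)
    (iad : ¬ rootLEon R.simples {α | copair θ α = 0} a d)
    (ida : ¬ rootLEon R.simples {α | copair θ α = 0} d a)
    (icd : ¬ rootLEon R.simples {α | copair θ α = 0} c d)
    (idc : ¬ rootLEon R.simples {α | copair θ α = 0} d c)
    (ibd : ¬ rootLEon R.simples {α | copair θ α = 0} b d)
    (idb : ¬ rootLEon R.simples {α | copair θ α = 0} d b)
    (hab : a + b = θ)
    (tac : (⟪a,c⟫:ℝ) = 0 ∨ a + c = θ) (tad : (⟪a,d⟫:ℝ) = 0 ∨ a + d = θ)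
    (tbc : (⟪b,c⟫:ℝ) = 0 ∨ b + c = θ) (tbd : (⟪b,d⟫:ℝ) = 0 ∨ b + d = θ)
    (tcd : (⟪c,d⟫:ℝ) = 0 ∨ c + d = θ) : False := by
  have hT : (0:ℝ) < ⟪θ,θ⟫ := theta_inner_pos R hθp
  have oac : (⟪a,c⟫:ℝ) = 0 := by
    rcases tac with o | s
    · exact o
    · exact absurd (add_left_cancel (s.trans hab.symm)) nbc.symm
  have oad : (⟪a,d⟫:ℝ) = 0 := by
    rcases tad with o | s
    · exact o
    · exact absurd (add_left_cancel (s.trans hab.symm)) nbd.symm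
  have obc : (⟪b,c⟫:ℝ) = 0 := by
    rcases tbc with o | s
    · exact o
    · have h2 : c + b = a + b := by rw [add_comm c b, s, ← hab]
      exact absurd (add_right_cancel h2) nac.symm
  have obd : (⟪b,d⟫:ℝ) = 0 := by
    rcases tbd with o | s
    · exact o
    · have h2 : d + b = a + b := by rw [add_comm d b, s, ← hab]
      exact absurd (add_right_cancel h2) nad.symm
  have ocd : (⟪c,d⟫:ℝ) = 0 := by
    rcases tcd with o | s
    · exact o
    · exfalso
      have h9 : (⟪a+b, c+d⟫:ℝ) = 0 := by
        rw [inner_add_left, inner_add_right, inner_add_right, oac, oad, obc, obd]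
        ring
      rw [hab, s] at h9
      linarith
  -- orthogonal triple a, c, d
  have oca : (⟪c,a⟫:ℝ) = 0 := by rw [real_inner_comm a c]; exact oac
  have oda : (⟪d,a⟫:ℝ) = 0 := by rw [real_inner_comm a d]; exact oad
  have odc : (⟪d,c⟫:ℝ) = 0 := by rw [real_inner_comm c d]; exact ocd
  obtain ⟨hroot, hcop⟩ := keyM R hθp hsc 3 ![a, c, d]
    (by intro i; fin_cases i <;> simpa)
    (by intro i j hij; fin_cases i <;> fin_cases j <;> simp_all)
    (by intro i j hij; fin_cases i <;> fin_cases j <;> simp_all)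
  have hsum3 : (∑ i, ![a, c, d] i) = a + c + d := by
    simp [Fin.sum_univ_three]
  rw [hsum3] at hroot hcop
  have hnegroot : -(θ - (a + c + d)) ∈ R.roots := R.neg_mem _ hroot
  have hβeq : -(θ - (a + c + d)) = c + d - b := by
    have h1 : -(θ - (a + c + d)) = (a + c + d) - θ := by abel
    rw [h1, ← hab]; abel
  have hβc : (⟪-(θ - (a + c + d)), c⟫:ℝ) = ⟪c,c⟫ := by
    rw [hβeq, inner_sub_left, inner_add_left, odc, obc]
    ring
  have hccpos : (0:ℝ) < ⟪c,c⟫ := inner_self_pos' (root_ne_zero R (R.pos_subset hc.1))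
  have hne : -(θ - (a + c + d)) ≠ c := by
    rw [hβeq]
    intro e
    apply nbd.symm
    have : d - b = 0 := by
      have h2 : c + d - b - c = c - c := by rw [e]
      calc d - b = c + d - b - c := by abel
        _ = 0 := by rw [h2]; abel
    rw [← sub_eq_zero]; exact this
  have hsubroot := root_sub_mem R hnegroot (R.pos_subset hc.1) (by rw [hβc]; exact hccpos) hne
  have hdb : -(θ - (a + c + d)) - c = d - b := by rw [hβeq]; abel
  rw [hdb] at hsubroot
  have h0 : copair θ (d - b) = 0 := by rw [copair_sub, hd.2, hb.2]; ring
  exact no_sub_root R hsc hsubroot h0 ibd idb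
lemma symmTri (θ : V) {x y : V} (h : (⟪x,y⟫:ℝ) = 0 ∨ x + y = θ) :
    (⟪y,x⟫:ℝ) = 0 ∨ y + x = θ :=
  h.imp (fun h0 => by rw [real_inner_comm]; exact h0) (fun hs => by rw [add_comm]; exact hs)


/-- Extra-special setting for `Δ` irreducible, not of type `A₁` (i.e. with more than two
roots), with highest root `θ`, height function `ht` and (even, for `Δ` not of type `A`)
Coxeter number `h = ht θ + 1`. Any antichain in the weight poset `Δ(1)` has at most `3`
elements; more precisely, pairwise incomparable roots `γ₁, …, γ_k ∈ Δ(1)` of the middle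
height `h/2` are pairwise orthogonal, `θ − Σ γᵢ` is a root lying in `Δ(2 − k)`, and
`k ≤ 3`. -/
theorem extraSpecial_antichain_le_three (R : RootSystemData V) (hirr : R.Irreducible)
    (hA1 : 2 < R.roots.card)
    (θ : V) (hθ : θ ∈ R.pos)
    (hhigh : ∀ γ ∈ R.pos, ∃ c : V → ℕ, θ = γ + ∑ α ∈ R.simples, (c α : ℝ) • α)
    (hextra : ∀ γ ∈ R.pos, copair θ γ = 0 ∨ copair θ γ = 1 ∨ γ = θ)
    (ht : V → ℕ)
    (hht : ∀ γ ∈ R.pos, ∃ c : V → ℕ,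
        γ = ∑ α ∈ R.simples, (c α : ℝ) • α ∧ ∑ α ∈ R.simples, c α = ht γ)
    (h : ℕ) (hcox : h = ht θ + 1) (heven : Even h) :
    (∀ Γ : Finset V, ↑Γ ⊆ levelOnePos R θ →
        IsAntichain (rootLEon R.simples {α | copair θ α = 0}) (Γ : Set V) → Γ.card ≤ 3) ∧
    (∀ (k : ℕ) (γ : Fin k → V), Function.Injective γ →
        (∀ i, γ i ∈ levelOnePos R θ) →
        (∀ i, ht (γ i) = h / 2) →
        (∀ i j, i ≠ j → ¬ rootLEon R.simples {α | copair θ α = 0} (γ i) (γ j)) →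
        (∀ i j, i ≠ j → (inner ℝ (γ i) (γ j) : ℝ) = 0) ∧
        (θ - ∑ i, γ i) ∈ R.roots ∧
        copair θ (θ - ∑ i, γ i) = 2 - (k : ℝ) ∧
        k ≤ 3) := by
  have hsc := simples_copair R hA1 hθ hhigh hextra
  constructor
  · -- antichain part
    intro Γ hΓ hanti
    by_contra hcard
    push_neg at hcard
    obtain ⟨t, hts, htc⟩ := Finset.exists_subset_card_eq (show 4 ≤ Γ.card from hcard)
    have e : Fin 4 ≃ {x // x ∈ t} := ((t.equivFin).trans (finCongr htc)).symm
    set g : Fin 4 → V := fun i => (e i : V) with hg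
    have hginj : Function.Injective g := fun i j hij => e.injective (Subtype.ext hij)
    have hgΓ : ∀ i, g i ∈ Γ := fun i => hts (e i).2
    have hgmem : ∀ i, g i ∈ levelOnePos R θ := fun i => hΓ (hgΓ i)
    have hginc : ∀ i j, i ≠ j → ¬ rootLEon R.simples {α | copair θ α = 0} (g i) (g j) :=
      fun i j hij => hanti (Finset.mem_coe.mpr (hgΓ i)) (Finset.mem_coe.mpr (hgΓ j))
        (hginj.ne hij)
    have tri : ∀ i j, i ≠ j → ((⟪g i, g j⟫:ℝ) = 0 ∨ g i + g j = θ) :=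
      fun i j hij => incomp_inner R hθ hextra hsc (hgmem i) (hgmem j) (hginj.ne hij)
        (hginc i j hij) (hginc j i hij.symm)
    have t01 := tri 0 1 (by decide)
    have t02 := tri 0 2 (by decide)
    have t03 := tri 0 3 (by decide)
    have t12 := tri 1 2 (by decide)
    have t13 := tri 1 3 (by decide)
    have t23 := tri 2 3 (by decide)
    rcases t01 with o01 | s01
    case inr =>
      exact fourTheta R hθ hextra hsc (hgmem 0) (hgmem 1) (hgmem 2) (hgmem 3)
        (hginj.ne (by decide)) (hginj.ne (by decide)) (hginj.ne (by decide))
        (hginj.ne (by decide))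
        (hginc 0 2 (by decide)) (hginc 2 0 (by decide)) (hginc 0 3 (by decide))
        (hginc 3 0 (by decide)) (hginc 2 3 (by decide)) (hginc 3 2 (by decide))
        (hginc 1 3 (by decide)) (hginc 3 1 (by decide))
        s01 t02 t03 t12 t13 t23
    rcases t02 with o02 | s02
    case inr =>
      exact fourTheta R hθ hextra hsc (hgmem 0) (hgmem 2) (hgmem 1) (hgmem 3)
        (hginj.ne (by decide)) (hginj.ne (by decide)) (hginj.ne (by decide))
        (hginj.ne (by decide))
        (hginc 0 1 (by decide)) (hginc 1 0 (by decide)) (hginc 0 3 (by decide))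
        (hginc 3 0 (by decide)) (hginc 1 3 (by decide)) (hginc 3 1 (by decide))
        (hginc 2 3 (by decide)) (hginc 3 2 (by decide))
        s02 (Or.inl o01) t03 (symmTri θ t12) t23 t13
    rcases t03 with o03 | s03
    case inr =>
      exact fourTheta R hθ hextra hsc (hgmem 0) (hgmem 3) (hgmem 1) (hgmem 2)
        (hginj.ne (by decide)) (hginj.ne (by decide)) (hginj.ne (by decide))
        (hginj.ne (by decide))
        (hginc 0 1 (by decide)) (hginc 1 0 (by decide)) (hginc 0 2 (by decide))
        (hginc 2 0 (by decide)) (hginc 1 2 (by decide)) (hginc 2 1 (by decide))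
        (hginc 3 2 (by decide)) (hginc 2 3 (by decide))
        s03 (Or.inl o01) (Or.inl o02) (symmTri θ t13) (symmTri θ t23) t12
    have o10 : (⟪g 1, g 0⟫:ℝ) = 0 := by rw [real_inner_comm]; exact o01
    have o20 : (⟪g 2, g 0⟫:ℝ) = 0 := by rw [real_inner_comm]; exact o02
    have o30 : (⟪g 3, g 0⟫:ℝ) = 0 := by rw [real_inner_comm]; exact o03
    rcases t12 with o12 | s12
    case inr =>
      exact fourTheta R hθ hextra hsc (hgmem 1) (hgmem 2) (hgmem 0) (hgmem 3)
        (hginj.ne (by decide)) (hginj.ne (by decide)) (hginj.ne (by decide))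
        (hginj.ne (by decide))
        (hginc 1 0 (by decide)) (hginc 0 1 (by decide)) (hginc 1 3 (by decide))
        (hginc 3 1 (by decide)) (hginc 0 3 (by decide)) (hginc 3 0 (by decide))
        (hginc 2 3 (by decide)) (hginc 3 2 (by decide))
        s12 (Or.inl o10) t13 (Or.inl o20) t23 (Or.inl o03)
    rcases t13 with o13 | s13
    case inr =>
      exact fourTheta R hθ hextra hsc (hgmem 1) (hgmem 3) (hgmem 0) (hgmem 2)
        (hginj.ne (by decide)) (hginj.ne (by decide)) (hginj.ne (by decide))
        (hginj.ne (by decide))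
        (hginc 1 0 (by decide)) (hginc 0 1 (by decide)) (hginc 1 2 (by decide))
        (hginc 2 1 (by decide)) (hginc 0 2 (by decide)) (hginc 2 0 (by decide))
        (hginc 3 2 (by decide)) (hginc 2 3 (by decide))
        s13 (Or.inl o10) (Or.inl o12) (Or.inl o30) (symmTri θ t23) (Or.inl o02)
    rcases t23 with o23 | s23
    case inr =>
      have o21 : (⟪g 2, g 1⟫:ℝ) = 0 := by rw [real_inner_comm]; exact o12
      have o31 : (⟪g 3, g 1⟫:ℝ) = 0 := by rw [real_inner_comm]; exact o13
      exact fourTheta R hθ hextra hsc (hgmem 2) (hgmem 3) (hgmem 0) (hgmem 1)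
        (hginj.ne (by decide)) (hginj.ne (by decide)) (hginj.ne (by decide))
        (hginj.ne (by decide))
        (hginc 2 0 (by decide)) (hginc 0 2 (by decide)) (hginc 2 1 (by decide))
        (hginc 1 2 (by decide)) (hginc 0 1 (by decide)) (hginc 1 0 (by decide))
        (hginc 3 1 (by decide)) (hginc 1 3 (by decide))
        s23 (Or.inl o20) (Or.inl o21) (Or.inl o30) (Or.inl o31) (Or.inl o01)
    -- all orthogonal
    have o21 : (⟪g 2, g 1⟫:ℝ) = 0 := by rw [real_inner_comm]; exact o12
    have o31 : (⟪g 3, g 1⟫:ℝ) = 0 := by rw [real_inner_comm]; exact o13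
    have o32 : (⟪g 3, g 2⟫:ℝ) = 0 := by rw [real_inner_comm]; exact o23
    have horth : ∀ i j, i ≠ j → (⟪g i, g j⟫:ℝ) = 0 := by
      intro i j hij
      fin_cases i <;> fin_cases j <;> simp_all
    have := keyM3 R hθ hextra hsc 4 g hginj hgmem horth hginc
    omega
  · -- fixed height part
    intro k γ hinj hmem hhts hinc
    have horth : ∀ i j, i ≠ j → (⟪γ i, γ j⟫:ℝ) = 0 := by
      intro i j hij
      rcases incomp_inner R hθ hextra hsc (hmem i) (hmem j) (hinj.ne hij)
        (hinc i j hij) (hinc j i hij.symm) with o | s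
      · exact o
      · exfalso
        obtain ⟨c0, hc0, hs0⟩ := hht θ hθ
        obtain ⟨c1, hc1, hs1⟩ := hht (γ i) (hmem i).1
        obtain ⟨c2, hc2, hs2⟩ := hht (γ j) (hmem j).1
        have hsumeq : ∑ α ∈ R.simples, (c0 α : ℝ) • α
            = ∑ α ∈ R.simples, ((c1 α + c2 α : ℕ) : ℝ) • α := by
          calc ∑ α ∈ R.simples, (c0 α : ℝ) • α = θ := hc0.symm
            _ = γ i + γ j := s.symm
            _ = ∑ α ∈ R.simples, (c1 α : ℝ) • α + ∑ α ∈ R.simples, (c2 α : ℝ) • α := by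
                rw [← hc1, ← hc2]
            _ = ∑ α ∈ R.simples, ((c1 α + c2 α : ℕ) : ℝ) • α := by
                rw [← Finset.sum_add_distrib]
                exact Finset.sum_congr rfl fun α _ => by push_cast; rw [add_smul]
        have hco := coeff_eq R.simples R.simples_indep hsumeq
        have hnat : ∀ α ∈ R.simples, c0 α = c1 α + c2 α := fun α hα => by
          exact_mod_cast hco α hα
        have hsum : ∑ α ∈ R.simples, c0 α = ∑ α ∈ R.simples, (c1 α + c2 α) :=
          Finset.sum_congr rfl hnat
        rw [Finset.sum_add_distrib, hs1, hs2, hhts i, hhts j, hs0] at hsum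
        have hmod : h % 2 = 0 := Nat.even_iff.mp heven
        omega
    obtain ⟨hr, hcp⟩ := keyM R hθ hsc k γ hmem horth hinc
    exact ⟨horth, hr, hcp, keyM3 R hθ hextra hsc k γ hinj hmem horth hinc⟩
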